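/- For the surface x(s,t) = (1/(6√3))·(2s(s cos t - 3 sin t), 2s(s sin t + 3 cos t), (s²-9)cos 2t - 6s sin 2t, (s²-9)sin 2t + 6s cos 2t, √3(s²+3)), the partial derivatives satisfy ⟨x_s, x_s⟩ = 0 and ⟨x_s, x_t⟩ = -1 everywhere. -/

import Mathlib

noncomputable def ip (v w : Fin 5 → ℝ) : ℝ :=
  -(v 0 * w 0) - v 1 * w 1 + v 2 * w 2 + v 3 * w 3 + v 4 * w 4

noncomputable def veroneseST (s t : ℝ) : Fin 5 → ℝ :=
  (1 / (6 * Real.sqrt 3)) •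
    ![2 * s * (s * Real.cos t - 3 * Real.sin t),
      2 * s * (s * Real.sin t + 3 * Real.cos t),
      (s ^ 2 - 9) * Real.cos (2 * t) - 6 * s * Real.sin (2 * t),
      (s ^ 2 - 9) * Real.sin (2 * t) + 6 * s * Real.cos (2 * t),
      Real.sqrt 3 * (s ^ 2 + 3)]

lemma coefEq : (1 : ℝ) / (6 * Real.sqrt 3) = Real.sqrt 3 / 18 := by
  have h3 : Real.sqrt 3 * Real.sqrt 3 = 3 := Real.mul_self_sqrt (by norm_num)
  rw [div_eq_div_iff (by positivity) (by norm_num)]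
  linarith [h3]

lemma hderivS (s t : ℝ) : HasDerivAt (fun s' => veroneseST s' t)
    ![Real.sqrt 3 * (4 * s * Real.cos t - 6 * Real.sin t) / 18,
      Real.sqrt 3 * (4 * s * Real.sin t + 6 * Real.cos t) / 18,
      Real.sqrt 3 * (2 * s * Real.cos (2 * t) - 6 * Real.sin (2 * t)) / 18,
      Real.sqrt 3 * (2 * s * Real.sin (2 * t) + 6 * Real.cos (2 * t)) / 18,
      s / 3] s := by
  have h3 : Real.sqrt 3 * Real.sqrt 3 = 3 := Real.mul_self_sqrt (by norm_num)
  rw [hasDerivAt_pi]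
  intro i
  fin_cases i
  · show HasDerivAt (fun s' : ℝ => 1 / (6 * Real.sqrt 3) *
      (2 * s' * (s' * Real.cos t - 3 * Real.sin t)))
      (Real.sqrt 3 * (4 * s * Real.cos t - 6 * Real.sin t) / 18) s
    have h := (((hasDerivAt_id s).const_mul 2).mul
      (((hasDerivAt_id s).mul_const (Real.cos t)).sub_const (3 * Real.sin t))).const_mul
      (1 / (6 * Real.sqrt 3))
    refine h.congr_deriv ?_
    rw [coefEq]; simp only [id]; ring
  · show HasDerivAt (fun s' : ℝ => 1 / (6 * Real.sqrt 3) *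
      (2 * s' * (s' * Real.sin t + 3 * Real.cos t)))
      (Real.sqrt 3 * (4 * s * Real.sin t + 6 * Real.cos t) / 18) s
    have h := (((hasDerivAt_id s).const_mul 2).mul
      (((hasDerivAt_id s).mul_const (Real.sin t)).add_const (3 * Real.cos t))).const_mul
      (1 / (6 * Real.sqrt 3))
    refine h.congr_deriv ?_
    rw [coefEq]; simp only [id]; ring
  · show HasDerivAt (fun s' : ℝ => 1 / (6 * Real.sqrt 3) *
      ((s' ^ 2 - 9) * Real.cos (2 * t) - 6 * s' * Real.sin (2 * t)))
      (Real.sqrt 3 * (2 * s * Real.cos (2 * t) - 6 * Real.sin (2 * t)) / 18) s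
    have h := ((((hasDerivAt_pow 2 s).sub_const 9).mul_const (Real.cos (2 * t))).sub
      (((hasDerivAt_id s).const_mul 6).mul_const (Real.sin (2 * t)))).const_mul
      (1 / (6 * Real.sqrt 3))
    refine h.congr_deriv ?_
    rw [coefEq]; push_cast; ring
  · show HasDerivAt (fun s' : ℝ => 1 / (6 * Real.sqrt 3) *
      ((s' ^ 2 - 9) * Real.sin (2 * t) + 6 * s' * Real.cos (2 * t)))
      (Real.sqrt 3 * (2 * s * Real.sin (2 * t) + 6 * Real.cos (2 * t)) / 18) s
    have h := ((((hasDerivAt_pow 2 s).sub_const 9).mul_const (Real.sin (2 * t))).add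
      (((hasDerivAt_id s).const_mul 6).mul_const (Real.cos (2 * t)))).const_mul
      (1 / (6 * Real.sqrt 3))
    refine h.congr_deriv ?_
    rw [coefEq]; push_cast; ring
  · show HasDerivAt (fun s' : ℝ => 1 / (6 * Real.sqrt 3) * (Real.sqrt 3 * (s' ^ 2 + 3)))
      (s / 3) s
    have h := (((hasDerivAt_pow 2 s).add_const 3).const_mul (Real.sqrt 3)).const_mul
      (1 / (6 * Real.sqrt 3))
    refine h.congr_deriv ?_
    rw [coefEq]; push_cast; linear_combination (s / 9) * h3

lemma hderivT (s t : ℝ) : HasDerivAt (fun t' => veroneseST s t')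
    ![Real.sqrt 3 * (-(2 * s ^ 2 * Real.sin t) - 6 * s * Real.cos t) / 18,
      Real.sqrt 3 * (2 * s ^ 2 * Real.cos t - 6 * s * Real.sin t) / 18,
      Real.sqrt 3 * (-(2 * (s ^ 2 - 9) * Real.sin (2 * t)) - 12 * s * Real.cos (2 * t)) / 18,
      Real.sqrt 3 * (2 * (s ^ 2 - 9) * Real.cos (2 * t) - 12 * s * Real.sin (2 * t)) / 18,
      0] t := by
  have hc2 : HasDerivAt (fun y : ℝ => Real.cos (2 * y)) (-Real.sin (2 * t) * (2 * 1)) t := by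
    have := (Real.hasDerivAt_cos (2 * t)).comp t ((hasDerivAt_id t).const_mul 2)
    exact this
  have hs2 : HasDerivAt (fun y : ℝ => Real.sin (2 * y)) (Real.cos (2 * t) * (2 * 1)) t := by
    have := (Real.hasDerivAt_sin (2 * t)).comp t ((hasDerivAt_id t).const_mul 2)
    exact this
  rw [hasDerivAt_pi]
  intro i
  fin_cases i
  · show HasDerivAt (fun t' : ℝ => 1 / (6 * Real.sqrt 3) *
      (2 * s * (s * Real.cos t' - 3 * Real.sin t')))
      (Real.sqrt 3 * (-(2 * s ^ 2 * Real.sin t) - 6 * s * Real.cos t) / 18) t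
    have h := ((((Real.hasDerivAt_cos t).const_mul s).sub
      ((Real.hasDerivAt_sin t).const_mul 3)).const_mul (2 * s)).const_mul (1 / (6 * Real.sqrt 3))
    refine h.congr_deriv ?_
    rw [coefEq]; ring
  · show HasDerivAt (fun t' : ℝ => 1 / (6 * Real.sqrt 3) *
      (2 * s * (s * Real.sin t' + 3 * Real.cos t')))
      (Real.sqrt 3 * (2 * s ^ 2 * Real.cos t - 6 * s * Real.sin t) / 18) t
    have h := ((((Real.hasDerivAt_sin t).const_mul s).add
      ((Real.hasDerivAt_cos t).const_mul 3)).const_mul (2 * s)).const_mul (1 / (6 * Real.sqrt 3))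
    refine h.congr_deriv ?_
    rw [coefEq]; ring
  · show HasDerivAt (fun t' : ℝ => 1 / (6 * Real.sqrt 3) *
      ((s ^ 2 - 9) * Real.cos (2 * t') - 6 * s * Real.sin (2 * t')))
      (Real.sqrt 3 * (-(2 * (s ^ 2 - 9) * Real.sin (2 * t)) - 12 * s * Real.cos (2 * t)) / 18) t
    have h := ((hc2.const_mul (s ^ 2 - 9)).sub (hs2.const_mul (6 * s))).const_mul
      (1 / (6 * Real.sqrt 3))
    refine h.congr_deriv ?_
    rw [coefEq]; ring
  · show HasDerivAt (fun t' : ℝ => 1 / (6 * Real.sqrt 3) *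
      ((s ^ 2 - 9) * Real.sin (2 * t') + 6 * s * Real.cos (2 * t')))
      (Real.sqrt 3 * (2 * (s ^ 2 - 9) * Real.cos (2 * t) - 12 * s * Real.sin (2 * t)) / 18) t
    have h := ((hs2.const_mul (s ^ 2 - 9)).add (hc2.const_mul (6 * s))).const_mul
      (1 / (6 * Real.sqrt 3))
    refine h.congr_deriv ?_
    rw [coefEq]; ring
  · show HasDerivAt (fun _ : ℝ => 1 / (6 * Real.sqrt 3) * (Real.sqrt 3 * (s ^ 2 + 3)))
      (0 : ℝ) t
    exact hasDerivAt_const t _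

theorem stmt7 : ∀ s t : ℝ,
    ip (deriv (fun s' => veroneseST s' t) s) (deriv (fun s' => veroneseST s' t) s) = 0 ∧
    ip (deriv (fun s' => veroneseST s' t) s) (deriv (fun t' => veroneseST s t') t) = -1 := by
  intro s t
  rw [(hderivS s t).deriv, (hderivT s t).deriv]
  have h1 := Real.sin_sq_add_cos_sq t
  have h2 := Real.sin_sq_add_cos_sq (2 * t)
  have h3 : Real.sqrt 3 * Real.sqrt 3 = 3 := Real.mul_self_sqrt (by norm_num)
  constructor
  · simp only [ip]
    norm_num [Matrix.cons_val_zero, Matrix.cons_val_one, Matrix.head_cons, Matrix.cons_val_two,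
      Matrix.cons_val_three, Matrix.cons_val_four]
    linear_combination (Real.sqrt 3 * Real.sqrt 3 / 324) * (-(16 * s ^ 2 + 36) * h1 +
      (4 * s ^ 2 + 36) * h2) + (-s ^ 2 / 27) * h3
  · simp only [ip]
    norm_num [Matrix.cons_val_zero, Matrix.cons_val_one, Matrix.head_cons, Matrix.cons_val_two,
      Matrix.cons_val_three, Matrix.cons_val_four]
    linear_combination (Real.sqrt 3 * Real.sqrt 3 / 324) * (12 * s ^ 2 * h1 +
      (-12 * s ^ 2 - 108) * h2) + (-1 / 3) * h3
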